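/- Let N > 0 and 0 < P₀ < P₁ < 1. Then D(P₁ᴮ||P₀ᴮ) - D(P₀ᴮ||P₁ᴮ) = N[(P₀+P₁)log(P₁/P₀) + (2-P₁-P₀)log((1-P₁)/(1-P₀))] > N[P₁ log(P₁/P₀) - 2P₁/(1-P₁)]. In particular, if log(P₁/P₀) > 2/(1-P₁) then D(P₁ᴮ||P₀ᴮ) > D(P₀ᴮ||P₁ᴮ), where D denotes the KL divergence between B(N,P₁) and B(N,P₀). -/

import Mathlib

open Finset

/-- The binomial probability mass function. -/
noncomputable def binomPMF (n : ℕ) (p : ℝ) (k : ℕ) : ℝ :=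
  (n.choose k : ℝ) * p^k * (1-p)^(n-k)

/-- The Kullback–Leibler divergence between two binomial distributions `B(n,p)`, `B(n,q)`. -/
noncomputable def klBinom (n : ℕ) (p q : ℝ) : ℝ :=
  ∑ k ∈ Finset.range (n+1), binomPMF n p k * Real.log (binomPMF n p k / binomPMF n q k)

lemma sum_ch (n : ℕ) (x y : ℝ) :
    ∑ k ∈ range (n+1), (k:ℝ) * ((n.choose k : ℝ) * x^k * y^(n-k)) = n * x * (x+y)^(n-1) := by
  cases n with
  | zero => simp
  | succ m =>
    rw [Finset.sum_range_succ']
    simp only [Nat.cast_zero, zero_mul, add_zero]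
    have step : ∑ i ∈ range (m+1), ((i+1:ℕ):ℝ) * (((m+1).choose (i+1) : ℝ) * x^(i+1) * y^(m+1-(i+1)))
        = ((m:ℝ)+1) * x * ∑ i ∈ range (m+1), x^i * y^(m-i) * (m.choose i : ℝ) := by
      rw [Finset.mul_sum]
      refine Finset.sum_congr rfl fun i hi => ?_
      have h' : ((m:ℝ)+1) * (m.choose i : ℝ) = (((m+1).choose (i+1) : ℕ):ℝ) * ((i:ℝ)+1) := by
        exact_mod_cast congrArg (Nat.cast : ℕ → ℝ) (Nat.add_one_mul_choose_eq m i)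
      simp only [Nat.add_sub_add_right]
      push_cast
      linear_combination (-(x^i * x * y^(m-i))) * h'
    rw [step, ← add_pow]
    push_cast
    ring

lemma kl_closed (n : ℕ) (p q : ℝ) (hp0 : 0 < p) (hp1 : p < 1) (hq0 : 0 < q) (hq1 : q < 1) :
    klBinom n p q = n * (p * Real.log (p/q) + (1-p) * Real.log ((1-p)/(1-q))) := by
  have hp' : (0:ℝ) < 1 - p := by linarith
  have hq' : (0:ℝ) < 1 - q := by linarith
  have hmean : ∑ k ∈ range (n+1), (k:ℝ) * binomPMF n p k = n * p := by
    have h := sum_ch n p (1-p)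
    simp only [binomPMF]
    rw [h]
    simp
  have hsum : ∑ k ∈ range (n+1), binomPMF n p k = 1 := by
    have h := add_pow p (1-p) n
    have h2 : p + (1-p) = (1:ℝ) := by ring
    rw [h2, one_pow] at h
    calc ∑ k ∈ range (n+1), binomPMF n p k
        = ∑ k ∈ range (n+1), p^k * (1-p)^(n-k) * (n.choose k : ℝ) := by
          refine Finset.sum_congr rfl fun k _ => ?_
          simp only [binomPMF]; ring
      _ = 1 := h.symm
  have hterm : ∀ k ∈ range (n+1),
      binomPMF n p k * Real.log (binomPMF n p k / binomPMF n q k)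
      = Real.log (p/q) * ((k:ℝ) * binomPMF n p k)
        + Real.log ((1-p)/(1-q)) * ((n:ℝ) * binomPMF n p k - (k:ℝ) * binomPMF n p k) := by
    intro k hk
    have hk' : k ≤ n := Nat.lt_succ_iff.mp (mem_range.mp hk)
    have hC : (0:ℝ) < (n.choose k : ℝ) := by exact_mod_cast Nat.choose_pos hk'
    have hratio : binomPMF n p k / binomPMF n q k = (p/q)^k * ((1-p)/(1-q))^(n-k) := by
      rw [binomPMF, binomPMF, div_pow, div_pow]
      field_simp
    rw [hratio, Real.log_mul (by positivity) (by positivity), Real.log_pow, Real.log_pow]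
    have hc : ((n - k : ℕ):ℝ) = (n:ℝ) - (k:ℝ) := by
      exact Nat.cast_sub hk'
    rw [hc]
    ring
  simp only [klBinom]
  rw [Finset.sum_congr rfl hterm, Finset.sum_add_distrib, ← Finset.mul_sum, ← Finset.mul_sum,
    Finset.sum_sub_distrib, ← Finset.mul_sum, hmean, hsum]
  ring

/-- Comparison of the two KL divergences between equal-length binomials. -/
theorem stmt10 (N : ℕ) (hN : 0 < N) (P₀ P₁ : ℝ) (h0 : 0 < P₀) (h01 : P₀ < P₁)
    (h1 : P₁ < 1) :
    klBinom N P₁ P₀ - klBinom N P₀ P₁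
        = N * ((P₀+P₁) * Real.log (P₁/P₀) + (2-P₁-P₀) * Real.log ((1-P₁)/(1-P₀))) ∧
    klBinom N P₁ P₀ - klBinom N P₀ P₁
        > N * (P₁ * Real.log (P₁/P₀) - 2*P₁/(1-P₁)) ∧
    (Real.log (P₁/P₀) > 2/(1-P₁) → klBinom N P₁ P₀ > klBinom N P₀ P₁) := by
  have h1' : (0:ℝ) < 1 - P₁ := by linarith
  have h0' : (0:ℝ) < 1 - P₀ := by linarith
  have hP1 : 0 < P₁ := lt_trans h0 h01
  have hP01 : P₀ < 1 := lt_trans h01 h1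
  have hA := kl_closed N P₁ P₀ hP1 h1 h0 hP01
  have hB := kl_closed N P₀ P₁ h0 hP01 hP1 h1
  have e1 : Real.log (P₀/P₁) = - Real.log (P₁/P₀) := by
    rw [← Real.log_inv, inv_div]
  have e2 : Real.log ((1-P₀)/(1-P₁)) = - Real.log ((1-P₁)/(1-P₀)) := by
    rw [← Real.log_inv, inv_div]
  have heq : klBinom N P₁ P₀ - klBinom N P₀ P₁
      = N * ((P₀+P₁) * Real.log (P₁/P₀) + (2-P₁-P₀) * Real.log ((1-P₁)/(1-P₀))) := by
    rw [hA, hB, e1, e2]; ring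
  -- key inequality facts
  set L := Real.log (P₁/P₀) with hLdef
  set M := Real.log ((1-P₁)/(1-P₀)) with hMdef
  have hL : 0 < L := Real.log_pos ((one_lt_div h0).mpr h01)
  have hg0 : 0 < -M := by
    rw [hMdef, ← e2]
    exact Real.log_pos ((one_lt_div h1').mpr (by linarith))
  have hgub : -M < P₁/(1-P₁) := by
    have hx : Real.log ((1-P₀)/(1-P₁)) < (1-P₀)/(1-P₁) - 1 := by
      apply Real.log_lt_sub_one_of_pos (by positivity)
      intro hcon
      have : 1 - P₀ = 1 - P₁ := by
        field_simp at hcon; linarith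
      linarith
    have hx2 : (1-P₀)/(1-P₁) - 1 = (P₁-P₀)/(1-P₁) := by
      field_simp
      ring
    have hx3 : (P₁-P₀)/(1-P₁) < P₁/(1-P₁) :=
      by gcongr; linarith
    rw [hMdef, ← e2]
    calc Real.log ((1-P₀)/(1-P₁)) < (P₁-P₀)/(1-P₁) := by rw [← hx2]; exact hx
      _ < P₁/(1-P₁) := hx3
  have hNR : (1:ℝ) ≤ (N:ℝ) := by exact_mod_cast hN
  have key : P₁ * L - 2*P₁/(1-P₁) < (P₀+P₁) * L + (2-P₁-P₀) * M := by
    rw [mul_div_assoc]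
    nlinarith [mul_pos h0 hL, mul_pos (by positivity : (0:ℝ) < P₀ + P₁) hg0]
  have hgt : klBinom N P₁ P₀ - klBinom N P₀ P₁ > N * (P₁ * L - 2*P₁/(1-P₁)) := by
    rw [heq]
    have := mul_lt_mul_of_pos_left key (by positivity : (0:ℝ) < (N:ℝ))
    linarith
  refine ⟨heq, hgt, fun hlog => ?_⟩
  have hpos : (0:ℝ) ≤ N * (P₁ * L - 2*P₁/(1-P₁)) := by
    have h3 : 0 ≤ P₁ * L - 2*P₁/(1-P₁) := by
      have h4 : P₁ * L - 2*P₁/(1-P₁) = P₁ * (L - 2/(1-P₁)) := by ring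
      rw [h4]
      exact le_of_lt (mul_pos hP1 (by linarith))
    positivity
  linarith
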